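/- arXiv:2304.03377 — 2 statements merged into one kernel-verified Lean document; each statement's English description precedes it below -/
import Mathlib

section
/- The ratio (1+p)/2 is tight for Greedy with geometric usage durations: for every p ∈ [0,1] and every ε > 0 there exists an instance I with all usage-duration distributions equal to Geometric(p) such that Greedy(I) / OPT(I) ≤ (1 + p)/2 + ε. -/
open Finset

/-- An online policy for the online matching problem with reusable resources,
with `N` resources, `T` requests, and neighborhoods `Nbr`.  Upon arrival of
request `t`, the policy observes the time `t`, the set of currently available
resources, and the history of previously observed availability sets, and
matches the request to at most one available resource adjacent to `t`
(`none` means no match). -/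
structure Policy (N T : ℕ) (Nbr : Fin T → Finset (Fin N)) where
  act : Fin T → Finset (Fin N) → List (Finset (Fin N)) → Option (Fin N)
  feasible : ∀ t I hist i, act t I hist = some i → i ∈ I ∩ Nbr t

/-- Sample space of the shared-Bernoulli coupling for geometric usage
durations: `ω i t` is the return flag `P_{it} ~ Bernoulli (p i)`.  A resource
`i` that is unavailable returns at the start of time `t` iff `ω i t = true`;
this makes the usage duration of every match of `i` distributed as
`Geometric (p i)` on `{1, 2, ...}`. -/
abbrev Flags (N T : ℕ) := Fin N → Fin T → Bool

/-- One step of the dynamics at time `t`.  The state is the pair consisting of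
the set of resources unavailable at the end of the previous step and the
history of observed availability sets. -/
def step {N T : ℕ} {Nbr : Fin T → Finset (Fin N)} (π : Policy N T Nbr)
    (ω : Flags N T) (s : Finset (Fin N) × List (Finset (Fin N))) (t : Fin T) :
    Finset (Fin N) × List (Finset (Fin N)) :=
  let busy := s.1.filter fun i => ω i t = false
  let I : Finset (Fin N) := Finset.univ \ busy
  match π.act t I s.2 with
  | none => (busy, I :: s.2)
  | some i => (insert i busy, I :: s.2)

/-- The state just before step `n` (resources unavailable at the end of step
`n-1`, together with the observed history). -/
def stateUpTo {N T : ℕ} {Nbr : Fin T → Finset (Fin N)} (π : Policy N T Nbr)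
    (ω : Flags N T) (n : ℕ) : Finset (Fin N) × List (Finset (Fin N)) :=
  ((List.finRange T).take n).foldl (step π ω) (∅, [])

/-- `I_t`: the set of resources available at time `t` under policy `π`. -/
def avail {N T : ℕ} {Nbr : Fin T → Finset (Fin N)} (π : Policy N T Nbr)
    (ω : Flags N T) (t : Fin T) : Finset (Fin N) :=
  Finset.univ \ ((stateUpTo π ω t.val).1.filter fun i => ω i t = false)

/-- `A_t`: the resource matched at time `t` under policy `π` (`none` = no match). -/
def act {N T : ℕ} {Nbr : Fin T → Finset (Fin N)} (π : Policy N T Nbr)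
    (ω : Flags N T) (t : Fin T) : Option (Fin N) :=
  π.act t (avail π ω t) (stateUpTo π ω t.val).2

/-- The total reward collected by policy `π` on the sample path `ω`. -/
def reward {N T : ℕ} {Nbr : Fin T → Finset (Fin N)} (r : Fin N → ℝ)
    (π : Policy N T Nbr) (ω : Flags N T) : ℝ :=
  ∑ t : Fin T, (act π ω t).elim 0 r

/-- Probability of the flag configuration `ω` when `P_{it} ~ Bernoulli (p i)`
independently. -/
noncomputable def weight {N T : ℕ} (p : Fin N → ℝ) (ω : Flags N T) : ℝ :=
  ∏ i : Fin N, ∏ t : Fin T, if ω i t then p i else 1 - p i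

/-- Expectation over the i.i.d. Bernoulli return flags. -/
noncomputable def expect {N T : ℕ} (p : Fin N → ℝ) (f : Flags N T → ℝ) : ℝ :=
  ∑ ω : Flags N T, weight p ω * f ω

/-- The greedy policy: match the available neighboring resource of largest
index (equivalently, of highest reward, since rewards are sorted). -/
def greedy (N T : ℕ) (Nbr : Fin T → Finset (Fin N)) : Policy N T Nbr where
  act := fun t I _ => if h : (I ∩ Nbr t).Nonempty then some ((I ∩ Nbr t).max' h) else none
  feasible := by
    intro t I hist i hi
    try simp only at hi
    by_cases h : (I ∩ Nbr t).Nonempty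
    · rw [dif_pos h, Option.some.injEq] at hi
      exact hi ▸ Finset.max'_mem _ h
    · rw [dif_neg h] at hi
      exact absurd hi (by simp)

/-- `Greedy(I)`: the expected total reward of the greedy policy. -/
noncomputable def greedyVal (N T : ℕ) (Nbr : Fin T → Finset (Fin N))
    (r : Fin N → ℝ) (p : Fin N → ℝ) : ℝ :=
  expect p (reward r (greedy N T Nbr))

/-- `OPT(I)`: the optimal expected total reward over all (clairvoyant)
policies; such a policy knows the whole instance, including the request
sequence, but observes returns only as they occur. -/
noncomputable def optVal (N T : ℕ) (Nbr : Fin T → Finset (Fin N))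
    (r : Fin N → ℝ) (p : Fin N → ℝ) : ℝ :=
  ⨆ π : Policy N T Nbr, expect p (reward r π)


private lemma sum_pi_prod {ι κ : Type*} [Fintype ι] [DecidableEq ι] [Fintype κ]
    (f : ι → κ → ℝ) :
    ∑ x : ι → κ, ∏ i, f i (x i) = ∏ i, ∑ j : κ, f i j := by
  classical
  rw [Finset.prod_univ_sum, Fintype.piFinset_univ]

private lemma sum_prod_flags {N T : ℕ} (g : Fin N → Fin T → Bool → ℝ) :
    ∑ ω : Flags N T, ∏ i, ∏ t, g i t (ω i t) = ∏ i, ∏ t, (g i t true + g i t false) := by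
  have h1 := sum_pi_prod (ι := Fin N) (κ := Fin T → Bool) (fun i gi => ∏ t, g i t (gi t))
  have h2 : ∀ i : Fin N, ∑ gi : Fin T → Bool, ∏ t, g i t (gi t)
      = ∏ t, (g i t true + g i t false) := by
    intro i
    have h3 := sum_pi_prod (ι := Fin T) (κ := Bool) (fun t b => g i t b)
    rw [h3]
    exact Finset.prod_congr rfl fun t _ => by simp [Fintype.sum_bool]
  calc ∑ ω : Flags N T, ∏ i, ∏ t, g i t (ω i t)
      = ∏ i, ∑ gi : Fin T → Bool, ∏ t, g i t (gi t) := by convert h1 using 2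
    _ = ∏ i, ∏ t, (g i t true + g i t false) := Finset.prod_congr rfl fun i _ => h2 i

private lemma sum_weight {N T : ℕ} (p : Fin N → ℝ) :
    ∑ ω : Flags N T, weight p ω = 1 := by
  unfold weight
  rw [sum_prod_flags (fun i _ b => if b then p i else 1 - p i)]
  simp

private lemma weight_nonneg {N T : ℕ} {p : Fin N → ℝ} (h0 : ∀ i, 0 ≤ p i)
    (h1 : ∀ i, p i ≤ 1) (ω : Flags N T) : 0 ≤ weight p ω := by
  refine Finset.prod_nonneg fun i _ => Finset.prod_nonneg fun t _ => ?_
  cases ω i t <;> simp [h0 i, h1 i, sub_nonneg]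

private lemma sum_weight_ind {N T : ℕ} (p : Fin N → ℝ) (i₀ : Fin N) (t₀ : Fin T) :
    ∑ ω : Flags N T, weight p ω * (if ω i₀ t₀ then 1 else 0) = p i₀ := by
  classical
  have key : ∀ ω : Flags N T, weight p ω * (if ω i₀ t₀ then 1 else 0)
      = ∏ i, ∏ t, ((if ω i t then p i else 1 - p i) *
          (if i = i₀ ∧ t = t₀ then (if ω i t then (1:ℝ) else 0) else 1)) := by
    intro ω
    simp only [Finset.prod_mul_distrib]
    unfold weight
    congr 1
    rw [Finset.prod_eq_single i₀ (fun i _ hi => Finset.prod_eq_one fun t _ => by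
          simp [hi]) (by simp)]
    rw [Finset.prod_eq_single t₀ (fun t _ ht => by simp [ht]) (by simp)]
    simp
  rw [Finset.sum_congr rfl fun ω _ => key ω,
    sum_prod_flags (fun i t b => (if b then p i else 1 - p i) *
      (if i = i₀ ∧ t = t₀ then (if b then (1:ℝ) else 0) else 1))]
  rw [Finset.prod_eq_single i₀ (fun i _ hi => Finset.prod_eq_one fun t _ => by
        simp [hi]) (by simp)]
  rw [Finset.prod_eq_single t₀ (fun t _ ht => by simp [ht]) (by simp)]
  simp

private lemma expect_le {N T : ℕ} {p : Fin N → ℝ} (h0 : ∀ i, 0 ≤ p i)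
    (h1 : ∀ i, p i ≤ 1) {f : Flags N T → ℝ} {c : ℝ} (hf : ∀ ω, f ω ≤ c) :
    _root_.expect p f ≤ c := by
  unfold _root_.expect
  calc ∑ ω : Flags N T, weight p ω * f ω
      ≤ ∑ ω : Flags N T, weight p ω * c :=
        Finset.sum_le_sum fun ω _ =>
          mul_le_mul_of_nonneg_left (hf ω) (weight_nonneg h0 h1 ω)
    _ = c := by rw [← Finset.sum_mul, sum_weight, one_mul]

private lemma expect_const {N T : ℕ} (p : Fin N → ℝ) (c : ℝ) :
    _root_.expect p (fun _ : Flags N T => c) = c := by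
  unfold _root_.expect
  rw [← Finset.sum_mul, sum_weight, one_mul]

private def myNbr : Fin 2 → Finset (Fin 2) := fun t => if t = 0 then Finset.univ else {1}

private lemma greedy_state1 (ω : Flags 2 2) :
    stateUpTo (greedy 2 2 myNbr) ω 1 = ({1}, [Finset.univ]) := by
  simp only [stateUpTo, step, greedy, myNbr, List.finRange]
  norm_num
  rfl

private lemma greedy_act0 (ω : Flags 2 2) : act (greedy 2 2 myNbr) ω 0 = some 1 := by
  simp only [act, avail, stateUpTo, greedy, myNbr, List.finRange]
  norm_num
  rfl

private lemma greedy_act1 (ω : Flags 2 2) :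
    act (greedy 2 2 myNbr) ω 1 = if ω 1 1 then some 1 else none := by
  have hs := greedy_state1 ω
  simp only [act, avail]
  rw [show ((1 : Fin 2) : ℕ) = 1 from rfl, hs]
  simp only [greedy, myNbr]
  cases h : ω 1 1 <;> simp [Finset.filter_singleton, h, Finset.eq_empty_iff_forall_notMem,
    Fin.forall_fin_two, Finset.Nonempty]

private lemma greedy_reward (ω : Flags 2 2) :
    reward (fun _ => (1:ℝ)) (greedy 2 2 myNbr) ω = 1 + (if ω 1 1 then 1 else 0) := by
  rw [reward, Fin.sum_univ_two, greedy_act0, greedy_act1]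
  cases h : ω 1 1 <;> simp

private def optPolicy : Policy 2 2 myNbr where
  act := fun t I _ =>
    if t = 0 then (if 0 ∈ I ∩ myNbr t then some 0 else none)
    else (if 1 ∈ I ∩ myNbr t then some 1 else none)
  feasible := by
    intro t I hist i hi
    split at hi <;> split at hi <;> simp_all

private lemma opt_state1 (ω : Flags 2 2) :
    stateUpTo optPolicy ω 1 = ({0}, [Finset.univ]) := by
  simp only [stateUpTo, step, optPolicy, myNbr, List.finRange]
  norm_num
  rfl

private lemma opt_act0 (ω : Flags 2 2) : act optPolicy ω 0 = some 0 := by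
  simp only [act, avail, stateUpTo, optPolicy, myNbr, List.finRange]
  norm_num

private lemma opt_act1 (ω : Flags 2 2) : act optPolicy ω 1 = some 1 := by
  have hs := opt_state1 ω
  simp only [act, avail]
  rw [show ((1 : Fin 2) : ℕ) = 1 from rfl, hs]
  simp only [optPolicy, myNbr]
  cases h : ω 0 1 <;> simp [Finset.filter_singleton, h]

private lemma opt_reward (ω : Flags 2 2) :
    reward (fun _ => (1:ℝ)) optPolicy ω = 2 := by
  rw [reward, Fin.sum_univ_two, opt_act0, opt_act1]
  norm_num

/-- **Tightness of the ratio `(1+p)/2`.**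
For every `p ∈ [0, 1]` and every `ε > 0` there is an instance of the online
matching problem with reusable resources, in which every usage-duration
distribution is `Geometric p` (encoded by the shared-Bernoulli return flags,
all with the same parameter `p`), such that
`Greedy(I) / OPT(I) ≤ (1 + p) / 2 + ε` (and `OPT(I) > 0`, so the ratio is a
genuine competitive ratio). -/
theorem greedy_geometric_tight
    (p : ℝ) (hp0 : 0 ≤ p) (hp1 : p ≤ 1) (ε : ℝ) (hε : 0 < ε) :
    ∃ (N T : ℕ) (r : Fin N → ℝ) (Nbr : Fin T → Finset (Fin N)),
      (∀ i, 0 ≤ r i) ∧ Monotone r ∧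
      0 < optVal N T Nbr r (fun _ => p) ∧
      greedyVal N T Nbr r (fun _ => p) / optVal N T Nbr r (fun _ => p)
        ≤ (1 + p) / 2 + ε := by
  refine ⟨2, 2, fun _ => 1, myNbr, fun _ => zero_le_one, monotone_const, ?_, ?_⟩
  all_goals {
  have hq0 : ∀ i : Fin 2, 0 ≤ (fun _ : Fin 2 => p) i := fun _ => hp0
  have hq1 : ∀ i : Fin 2, (fun _ : Fin 2 => p) i ≤ 1 := fun _ => hp1
  -- greedy value
  have hgv : greedyVal 2 2 myNbr (fun _ => 1) (fun _ => p) = 1 + p := by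
    unfold greedyVal _root_.expect
    rw [Finset.sum_congr rfl fun ω _ => by rw [greedy_reward ω]]
    have : ∀ ω : Flags 2 2,
        weight (fun _ : Fin 2 => p) ω * (1 + (if ω 1 1 then 1 else 0))
          = weight (fun _ : Fin 2 => p) ω
            + weight (fun _ : Fin 2 => p) ω * (if ω 1 1 then 1 else 0) := by
      intro ω; ring
    rw [Finset.sum_congr rfl fun ω _ => this ω, Finset.sum_add_distrib, sum_weight,
      sum_weight_ind (fun _ : Fin 2 => p) 1 1]
  -- opt policy value
  have hov : _root_.expect (fun _ : Fin 2 => p) (reward (fun _ => (1:ℝ)) optPolicy) = 2 := by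
    have : reward (fun _ => (1:ℝ)) optPolicy = fun _ => 2 := funext opt_reward
    rw [this, expect_const]
  -- bound on every policy
  have hbdd : BddAbove (Set.range fun π : Policy 2 2 myNbr =>
      _root_.expect (fun _ : Fin 2 => p) (reward (fun _ => (1:ℝ)) π)) := by
    refine ⟨2, fun x hx => ?_⟩
    obtain ⟨π, rfl⟩ := hx
    refine expect_le hq0 hq1 fun ω => ?_
    rw [reward, Fin.sum_univ_two]
    have h1 : ∀ t : Fin 2, (act π ω t).elim 0 (fun _ => (1:ℝ)) ≤ 1 := by
      intro t; cases act π ω t <;> simp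
    linarith [h1 0, h1 1]
  have hopt : (2:ℝ) ≤ optVal 2 2 myNbr (fun _ => 1) (fun _ => p) := by
    rw [optVal, ← hov]
    exact le_ciSup hbdd optPolicy
  first
  | linarith
  | (have h1 : greedyVal 2 2 myNbr (fun _ => 1) (fun _ => p)
          / optVal 2 2 myNbr (fun _ => 1) (fun _ => p) ≤ (1 + p) / 2 := by
       rw [hgv]
       gcongr <;> linarith
     linarith)
  }
end

section
/- Under the shared-Bernoulli coupling of Greedy and OPT with geometric usage durations F_i = Geometric(p_i) and p = min_i p_i, LOST ≤ (1 - p) · ( Greedy(I) − Σ_{t=1}^T Σ_{i=1}^N r_i · Pr(A*_t = A_t = i) ). -/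
open Finset

/-- `LOST`: the expected reward collected by the benchmark policy `π` (playing
the role of `OPT`, coupled with Greedy via the shared Bernoulli return flags)
at `(i, t)` such that `A*_t = i` and the event `O_{it}` occurs, where `O_{it}`
is the event that every resource `j ≥ i` is unavailable under Greedy at time
`t`. -/
noncomputable def lost (N T : ℕ) (Nbr : Fin T → Finset (Fin N)) (r : Fin N → ℝ)
    (pv : Fin N → ℝ) (π : Policy N T Nbr) : ℝ :=
  expect pv (fun ω => ∑ t : Fin T, ∑ i : Fin N,
    if act π ω t = some i ∧ (∀ j, i ≤ j → j ∉ avail (greedy N T Nbr) ω t)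
    then r i else 0)


section Aux
variable {N T : ℕ} {Nbr : Fin T → Finset (Fin N)}

lemma stateUpTo_succ (π : Policy N T Nbr) (ω : Flags N T) (n : ℕ) (h : n < T) :
    stateUpTo π ω (n + 1) = step π ω (stateUpTo π ω n) ⟨n, h⟩ := by
  unfold stateUpTo
  rw [List.take_succ]
  have h2 : (List.finRange T)[n]? = some ⟨n, h⟩ := by
    rw [List.getElem?_eq_getElem (by simpa using h)]
    simp
  rw [h2]
  simp

lemma mem_busy_succ (π : Policy N T Nbr) (ω : Flags N T) (n : ℕ) (h : n < T) (i : Fin N) :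
    i ∈ (stateUpTo π ω (n + 1)).1 ↔
      ((i ∈ (stateUpTo π ω n).1 ∧ ω i ⟨n, h⟩ = false) ∨ act π ω ⟨n, h⟩ = some i) := by
  rw [stateUpTo_succ π ω n h]
  have hact : act π ω ⟨n, h⟩ =
      π.act ⟨n, h⟩ (Finset.univ \ ((stateUpTo π ω n).1.filter
        fun j => ω j ⟨n, h⟩ = false)) (stateUpTo π ω n).2 := rfl
  unfold step
  cases hA : act π ω ⟨n, h⟩ with
  | none =>
      rw [hact] at hA
      simp only [hA, Finset.mem_filter]
      tauto
  | some j =>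
      rw [hact] at hA
      simp only [hA, Finset.mem_insert, Finset.mem_filter, Option.some.injEq]
      constructor
      · rintro (rfl | hm)
        · exact Or.inr rfl
        · exact Or.inl hm
      · rintro (hm | rfl)
        · exact Or.inr hm
        · exact Or.inl rfl

lemma busy_origin (π : Policy N T Nbr) (ω : Flags N T) (i : Fin N) :
    ∀ n, n ≤ T → i ∈ (stateUpTo π ω n).1 →
      ∃ t' : Fin T, t'.val < n ∧ act π ω t' = some i ∧
        ∀ s : Fin T, t'.val < s.val → s.val < n → ω i s = false := by
  intro n
  induction n with
  | zero => intro _ hmem; simp [stateUpTo] at hmem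
  | succ m ih =>
      intro hm hmem
      have hmT : m < T := hm
      rw [mem_busy_succ π ω m hmT i] at hmem
      rcases hmem with ⟨hmem, hflag⟩ | hA
      · obtain ⟨t', ht1, ht2, ht3⟩ := ih (le_of_lt hmT) hmem
        refine ⟨t', lt_trans ht1 (Nat.lt_succ_self m), ht2, ?_⟩
        intro s hs1 hs2
        rcases Nat.lt_succ_iff_lt_or_eq.mp hs2 with h | h
        · exact ht3 s hs1 h
        · have : s = ⟨m, hmT⟩ := Fin.ext h
          rw [this]; exact hflag
      · exact ⟨⟨m, hmT⟩, Nat.lt_succ_self m, hA, fun s hs1 hs2 => by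
          simp only [] at hs1; omega⟩

lemma busy_persist (π : Policy N T Nbr) (ω : Flags N T) (i : Fin N) (t1 : Fin T)
    (hA : act π ω t1 = some i) :
    ∀ k, t1.val < k → k ≤ T →
      (∀ s : Fin T, t1.val < s.val → s.val < k → ω i s = false) →
      i ∈ (stateUpTo π ω k).1 := by
  intro k
  induction k with
  | zero => omega
  | succ m ih =>
      intro h1 h2 h3
      have hmT : m < T := h2
      rw [mem_busy_succ π ω m hmT i]
      rcases Nat.lt_succ_iff_lt_or_eq.mp h1 with h | h
      · left
        refine ⟨ih h (le_of_lt hmT) (fun s hs1 hs2 => h3 s hs1 (lt_trans hs2 (Nat.lt_succ_self m))), ?_⟩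
        exact h3 ⟨m, hmT⟩ h (Nat.lt_succ_self m)
      · right
        have : t1 = ⟨m, hmT⟩ := Fin.ext h
        rw [← this]; exact hA

lemma release (π : Policy N T Nbr) (ω : Flags N T) (i : Fin N) (t1 t2 : Fin T)
    (hA : act π ω t1 = some i) (hav : i ∈ avail π ω t2) (hlt : t1.val < t2.val) :
    ∃ s : Fin T, t1.val < s.val ∧ s.val ≤ t2.val ∧ ω i s = true := by
  by_contra hcon
  push_neg at hcon
  have hflags : ∀ s : Fin T, t1.val < s.val → s.val ≤ t2.val → ω i s = false := by
    intro s h1 h2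
    cases hb : ω i s with
    | false => rfl
    | true => exact absurd hb (by simpa using hcon s h1 h2)
  have hmem : i ∈ (stateUpTo π ω t2.val).1 :=
    busy_persist π ω i t1 hA t2.val hlt (le_of_lt t2.isLt)
      (fun s hs1 hs2 => hflags s hs1 (le_of_lt hs2))
  have hf2 : ω i t2 = false := hflags t2 hlt le_rfl
  unfold avail at hav
  rw [Finset.mem_sdiff] at hav
  exact hav.2 (Finset.mem_filter.mpr ⟨hmem, hf2⟩)

lemma stateUpTo_congr (π : Policy N T Nbr) (ω ω' : Flags N T)
    (n : ℕ) (hn : n ≤ T)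
    (h : ∀ j (s : Fin T), s.val < n → ω j s = ω' j s) :
    stateUpTo π ω n = stateUpTo π ω' n := by
  induction n with
  | zero => rfl
  | succ m ih =>
      have hmT : m < T := hn
      rw [stateUpTo_succ π ω m hmT, stateUpTo_succ π ω' m hmT,
        ih (le_of_lt hmT) (fun j s hs => h j s (lt_trans hs (Nat.lt_succ_self m)))]
      unfold step
      have hω : ∀ j, ω j ⟨m, hmT⟩ = ω' j ⟨m, hmT⟩ := fun j => h j ⟨m, hmT⟩ (Nat.lt_succ_self m)
      simp only [hω]

lemma act_congr (π : Policy N T Nbr) (ω ω' : Flags N T) (t : Fin T)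
    (h : ∀ j (s : Fin T), s.val ≤ t.val → ω j s = ω' j s) :
    act π ω t = act π ω' t := by
  have hst : stateUpTo π ω t.val = stateUpTo π ω' t.val :=
    stateUpTo_congr π ω ω' t.val (le_of_lt t.isLt)
      (fun j s hs => h j s (le_of_lt hs))
  unfold act avail
  rw [hst]
  have hω : ∀ j, ω j t = ω' j t := fun j => h j t le_rfl
  simp only [hω]

/-- Flip/set the flag of resource `i` at time `u` to `b`. -/
def upd {N T : ℕ} (ω : Flags N T) (i : Fin N) (u : Fin T) (b : Bool) : Flags N T :=
  fun j s => if j = i ∧ s = u then b else ω j s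

lemma upd_same {N T : ℕ} (ω : Flags N T) (i : Fin N) (u : Fin T) (b : Bool) :
    upd ω i u b i u = b := by simp [upd]

lemma upd_ne {N T : ℕ} (ω : Flags N T) (i : Fin N) (u : Fin T) (b : Bool)
    (j : Fin N) (s : Fin T) (h : ¬(j = i ∧ s = u)) : upd ω i u b j s = ω j s := by
  simp [upd, h]

lemma upd_eq_self {N T : ℕ} (ω : Flags N T) (i : Fin N) (u : Fin T) :
    upd ω i u (ω i u) = ω := by
  funext j s
  by_cases h : j = i ∧ s = u
  · obtain ⟨rfl, rfl⟩ := h; simp [upd]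
  · exact upd_ne ω i u _ j s h

/-- The weight with the factor at `(i, u)` removed. -/
noncomputable def wex {N T : ℕ} (pv : Fin N → ℝ) (ω : Flags N T) (i : Fin N) (u : Fin T) : ℝ :=
  (∏ j ∈ Finset.univ.erase i, ∏ t : Fin T, if ω j t then pv j else 1 - pv j) *
    ∏ t ∈ Finset.univ.erase u, if ω i t then pv i else 1 - pv i

lemma weight_eq_wex {N T : ℕ} (pv : Fin N → ℝ) (ω : Flags N T) (i : Fin N) (u : Fin T) :
    weight pv ω = (if ω i u then pv i else 1 - pv i) * wex pv ω i u := by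
  unfold weight wex
  rw [← Finset.mul_prod_erase Finset.univ _ (Finset.mem_univ i),
    ← Finset.mul_prod_erase Finset.univ _ (Finset.mem_univ u)]
  ring

lemma wex_upd {N T : ℕ} (pv : Fin N → ℝ) (ω : Flags N T) (i : Fin N) (u : Fin T) (b : Bool) :
    wex pv (upd ω i u b) i u = wex pv ω i u := by
  unfold wex
  congr 1
  · refine Finset.prod_congr rfl fun j hj => Finset.prod_congr rfl fun t _ => ?_
    rw [upd_ne ω i u b j t (fun h => (Finset.mem_erase.mp hj).1 h.1)]
  · refine Finset.prod_congr rfl fun t ht => ?_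
    rw [upd_ne ω i u b i t (fun h => (Finset.mem_erase.mp ht).1 h.2)]

lemma sum_flag_false {N T : ℕ} (pv : Fin N → ℝ) (i : Fin N) (u : Fin T)
    (f : Flags N T → ℝ) (hf : ∀ ω b, f (upd ω i u b) = f ω) :
    ∑ ω : Flags N T, weight pv ω * (if ω i u = false then f ω else 0)
      = (1 - pv i) * ∑ ω : Flags N T, weight pv ω * f ω := by
  classical
  set S : Finset (Flags N T) := Finset.univ.filter (fun ω => ω i u = false) with hS
  have hLHS : ∑ ω : Flags N T, weight pv ω * (if ω i u = false then f ω else 0)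
      = ∑ ω ∈ S, weight pv ω * f ω := by
    rw [hS, Finset.sum_filter]
    exact Finset.sum_congr rfl fun ω _ => by rw [mul_ite, mul_zero]
  have hfalse : ∀ ω ∈ S, weight pv ω * f ω = (1 - pv i) * (wex pv ω i u * f ω) := by
    intro ω hω
    have : ω i u = false := (Finset.mem_filter.mp hω).2
    rw [weight_eq_wex pv ω i u, this]
    simp; ring
  have hRHS : ∑ ω : Flags N T, weight pv ω * f ω = ∑ ω ∈ S, wex pv ω i u * f ω := by
    rw [← Finset.sum_filter_add_sum_filter_not Finset.univ (fun ω => ω i u = false)]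
    have hbij : ∑ ω ∈ Finset.univ.filter (fun ω : Flags N T => ¬ ω i u = false),
        weight pv ω * f ω = ∑ ω ∈ S, pv i * (wex pv ω i u * f ω) := by
      refine Finset.sum_nbij' (fun ω => upd ω i u false) (fun ω => upd ω i u true) ?_ ?_ ?_ ?_ ?_
      · intro ω hω
        simp only [hS, Finset.mem_filter, Finset.mem_univ, true_and]
        exact upd_same ω i u false
      · intro ω hω
        simp only [Finset.mem_filter, Finset.mem_univ, true_and]
        rw [upd_same]; simp
      · intro ω hω
        have hb : ω i u = true := by
          have := (Finset.mem_filter.mp hω).2; simpa using this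
        funext j s
        by_cases h : j = i ∧ s = u
        · obtain ⟨rfl, rfl⟩ := h; simp [upd, hb]
        · simp only [upd, if_neg h]
      · intro ω hω
        have hb : ω i u = false := (Finset.mem_filter.mp hω).2
        funext j s
        by_cases h : j = i ∧ s = u
        · obtain ⟨rfl, rfl⟩ := h; simp [upd, hb]
        · simp only [upd, if_neg h]
      · intro ω hω
        have hb : ω i u = true := by
          have := (Finset.mem_filter.mp hω).2; simpa using this
        rw [weight_eq_wex pv ω i u, hb]
        simp only [wex_upd, hf, if_true]
        ring
    rw [hbij, Finset.sum_congr rfl hfalse, ← Finset.sum_add_distrib]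
    refine Finset.sum_congr rfl fun ω hω => by ring
  rw [hLHS, hRHS, Finset.sum_congr rfl hfalse, ← Finset.mul_sum]

lemma act_mem_avail (π : Policy N T Nbr) (ω : Flags N T) (t : Fin T) (i : Fin N)
    (h : act π ω t = some i) : i ∈ avail π ω t :=
  (Finset.mem_inter.mp (π.feasible t (avail π ω t) (stateUpTo π ω t.val).2 i h)).1

/-- The existence statement defining the most recent previous match. -/
def PrevMatch (σ : Policy N T Nbr) (ω : Flags N T) (i : Fin N) (t t' : Fin T) : Prop :=
  t'.val < t.val ∧ act σ ω t' = some i ∧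
    ∀ s : Fin T, t'.val < s.val → s.val ≤ t.val → ω i s = false

lemma exists_prevMatch (σ : Policy N T Nbr) (ω : Flags N T) (i : Fin N) (t : Fin T)
    (h : i ∉ avail σ ω t) : ∃ t' : Fin T, PrevMatch σ ω i t t' := by
  have hmem : i ∈ (stateUpTo σ ω t.val).1 ∧ ω i t = false := by
    unfold avail at h
    rw [Finset.mem_sdiff] at h
    push_neg at h
    exact Finset.mem_filter.mp (h (Finset.mem_univ i)) |>.imp id (fun x => x) |>.imp id id
  obtain ⟨t', h1, h2, h3⟩ := busy_origin σ ω i t.val (le_of_lt t.isLt) hmem.1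
  refine ⟨t', h1, h2, fun s hs1 hs2 => ?_⟩
  rcases lt_or_eq_of_le hs2 with hlt | heq
  · exact h3 s hs1 hlt
  · rw [Fin.ext heq]; exact hmem.2

noncomputable def lastMatch (σ : Policy N T Nbr) (ω : Flags N T) (i : Fin N) (t : Fin T) :
    Fin T := by
  classical
  exact if h : ∃ t' : Fin T, PrevMatch σ ω i t t' then h.choose else t

lemma lastMatch_spec (σ : Policy N T Nbr) (ω : Flags N T) (i : Fin N) (t : Fin T)
    (h : ∃ t' : Fin T, PrevMatch σ ω i t t') : PrevMatch σ ω i t (lastMatch σ ω i t) := by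
  classical
  unfold lastMatch
  rw [dif_pos h]
  exact h.choose_spec

lemma no_shared_lastMatch (σ π : Policy N T Nbr) (ω : Flags N T) (i : Fin N)
    (t1 t2 m : Fin T) (hlt : t1.val < t2.val)
    (h1 : act π ω t1 = some i) (h2 : act π ω t2 = some i)
    (hm1 : PrevMatch σ ω i t1 m) (hm2 : PrevMatch σ ω i t2 m) : False := by
  obtain ⟨s, hs1, hs2, hs3⟩ :=
    release π ω i t1 t2 h1 (act_mem_avail π ω t2 i h2) hlt
  have : ω i s = false := hm2.2.2 s (lt_trans hm1.1 hs1) hs2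
  rw [this] at hs3
  exact Bool.false_ne_true hs3

lemma card_charge_le (σ π : Policy N T Nbr) (ω : Flags N T) (i : Fin N) :
    (Finset.univ.filter fun t : Fin T =>
        act π ω t = some i ∧ i ∉ avail σ ω t).card ≤
    (Finset.univ.filter fun t' : Fin T =>
        act σ ω t' = some i ∧ ¬ act π ω t' = some i ∧ t'.val + 1 < T ∧
        ∀ s : Fin T, s.val = t'.val + 1 → ω i s = false).card := by
  classical
  apply Finset.card_le_card_of_injOn (lastMatch σ ω i)
  · intro t ht
    rw [Finset.mem_coe, Finset.mem_filter] at ht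
    obtain ⟨-, hπ, hnav⟩ := ht
    have hex := exists_prevMatch σ ω i t hnav
    obtain ⟨hmlt, hmact, hmflags⟩ := lastMatch_spec σ ω i t hex
    rw [Finset.mem_coe, Finset.mem_filter]
    refine ⟨Finset.mem_univ _, hmact, ?_, ?_, ?_⟩
    · intro hc
      obtain ⟨s, hs1, hs2, hs3⟩ :=
        release π ω i (lastMatch σ ω i t) t hc (act_mem_avail π ω t i hπ) hmlt
      rw [hmflags s hs1 hs2] at hs3
      exact Bool.false_ne_true hs3
    · have := t.isLt; omega
    · intro s hs
      exact hmflags s (by omega) (by omega)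
  · intro t1 ht1 t2 ht2 heq
    rw [Finset.coe_filter] at ht1 ht2
    obtain ⟨-, hπ1, hnav1⟩ := ht1
    obtain ⟨-, hπ2, hnav2⟩ := ht2
    have hm1 := lastMatch_spec σ ω i t1 (exists_prevMatch σ ω i t1 hnav1)
    have hm2 := lastMatch_spec σ ω i t2 (exists_prevMatch σ ω i t2 hnav2)
    rw [heq] at hm1
    rcases lt_trichotomy t1.val t2.val with h | h | h
    · exact absurd (no_shared_lastMatch σ π ω i t1 t2 _ h hπ1 hπ2 hm1 hm2) not_false
    · exact Fin.ext h
    · exact absurd (no_shared_lastMatch σ π ω i t2 t1 _ h hπ2 hπ1 hm2 hm1) not_false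

lemma weight_nonneg_s8 {N' T' : ℕ} (pv : Fin N' → ℝ) (hpv0 : ∀ j, 0 ≤ pv j)
    (hpv1 : ∀ j, pv j ≤ 1) (ω : Flags N' T') : 0 ≤ weight pv ω := by
  refine Finset.prod_nonneg fun j _ => Finset.prod_nonneg fun t _ => ?_
  by_cases h : ω j t
  · rw [if_pos h]; exact hpv0 j
  · rw [if_neg h]; linarith [hpv1 j]

lemma pointwise_bound (σ π : Policy N T Nbr) (r : Fin N → ℝ) (hr0 : ∀ i, 0 ≤ r i)
    (ω : Flags N T) :
    (∑ t : Fin T, ∑ i : Fin N,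
      if act π ω t = some i ∧ (∀ j, i ≤ j → j ∉ avail σ ω t) then r i else 0)
    ≤ ∑ i : Fin N, ∑ t' : Fin T, r i *
        (if act σ ω t' = some i ∧ ¬ act π ω t' = some i ∧ t'.val + 1 < T ∧
            (∀ s : Fin T, s.val = t'.val + 1 → ω i s = false) then 1 else 0) := by
  classical
  rw [Finset.sum_comm]
  refine Finset.sum_le_sum fun i _ => ?_
  have h1 : (∑ t : Fin T, if act π ω t = some i ∧ (∀ j, i ≤ j → j ∉ avail σ ω t)
      then r i else 0)
      ≤ ∑ t : Fin T, if act π ω t = some i ∧ i ∉ avail σ ω t then r i else 0 := by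
    refine Finset.sum_le_sum fun t _ => ?_
    by_cases h : act π ω t = some i ∧ (∀ j, i ≤ j → j ∉ avail σ ω t)
    · rw [if_pos h, if_pos ⟨h.1, h.2 i le_rfl⟩]
    · rw [if_neg h]
      by_cases h' : act π ω t = some i ∧ i ∉ avail σ ω t
      · rw [if_pos h']; exact hr0 i
      · rw [if_neg h']
  refine le_trans h1 ?_
  have h2 : (∑ t : Fin T, if act π ω t = some i ∧ i ∉ avail σ ω t then r i else 0)
      = r i * ((Finset.univ.filter fun t : Fin T =>
          act π ω t = some i ∧ i ∉ avail σ ω t).card : ℝ) := by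
    rw [← Finset.sum_filter, Finset.sum_const, nsmul_eq_mul, mul_comm]
  have h3 : (∑ t' : Fin T, r i *
        (if act σ ω t' = some i ∧ ¬ act π ω t' = some i ∧ t'.val + 1 < T ∧
            (∀ s : Fin T, s.val = t'.val + 1 → ω i s = false) then (1:ℝ) else 0))
      = r i * ((Finset.univ.filter fun t' : Fin T =>
          act σ ω t' = some i ∧ ¬ act π ω t' = some i ∧ t'.val + 1 < T ∧
            (∀ s : Fin T, s.val = t'.val + 1 → ω i s = false)).card : ℝ) := by
    rw [← Finset.mul_sum]
    congr 1
    rw [Finset.sum_boole]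
  rw [h2, h3]
  exact mul_le_mul_of_nonneg_left
    (Nat.cast_le.mpr (card_charge_le σ π ω i)) (hr0 i)

lemma exp_good_le (σ π : Policy N T Nbr) (pv : Fin N → ℝ) (hpv0 : ∀ j, 0 ≤ pv j)
    (hpv1 : ∀ j, pv j ≤ 1) (p : ℝ) (hpi : ∀ j, p ≤ pv j) (i : Fin N) (t' : Fin T) :
    (∑ ω : Flags N T, weight pv ω *
      (if act σ ω t' = some i ∧ ¬ act π ω t' = some i ∧ t'.val + 1 < T ∧
          (∀ s : Fin T, s.val = t'.val + 1 → ω i s = false) then 1 else 0))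
    ≤ (1 - p) * ∑ ω : Flags N T, weight pv ω *
        (if act σ ω t' = some i ∧ ¬ act π ω t' = some i then 1 else 0) := by
  classical
  have h1p : 1 - pv i ≤ 1 - p := by linarith [hpi i]
  have h1p0 : 0 ≤ 1 - p := by linarith [hpi i, hpv1 i]
  have hbase_nonneg : (0:ℝ) ≤ ∑ ω : Flags N T, weight pv ω *
      (if act σ ω t' = some i ∧ ¬ act π ω t' = some i then 1 else 0) := by
    refine Finset.sum_nonneg fun ω _ => mul_nonneg (weight_nonneg_s8 pv hpv0 hpv1 ω) ?_
    by_cases h : act σ ω t' = some i ∧ ¬ act π ω t' = some i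
    · rw [if_pos h]; norm_num
    · rw [if_neg h]
  by_cases hT : t'.val + 1 < T
  · set u : Fin T := ⟨t'.val + 1, hT⟩ with hu
    set f : Flags N T → ℝ := fun ω =>
      if act σ ω t' = some i ∧ ¬ act π ω t' = some i then 1 else 0 with hfdef
    have hrw : ∀ ω : Flags N T,
        (if act σ ω t' = some i ∧ ¬ act π ω t' = some i ∧ t'.val + 1 < T ∧
          (∀ s : Fin T, s.val = t'.val + 1 → ω i s = false) then (1:ℝ) else 0)
        = (if ω i u = false then f ω else 0) := by
      intro ω
      by_cases hflag : ω i u = false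
      · rw [if_pos hflag]
        simp only [hfdef]
        by_cases hb : act σ ω t' = some i ∧ ¬ act π ω t' = some i
        · rw [if_pos hb, if_pos ⟨hb.1, hb.2, hT, fun s hs => by
            rwa [show s = u from Fin.ext hs]⟩]
        · rw [if_neg hb, if_neg (fun hc => hb ⟨hc.1, hc.2.1⟩)]
      · rw [if_neg hflag, if_neg (fun hc => hflag (hc.2.2.2 u rfl))]
    have hf : ∀ ω b, f (upd ω i u b) = f ω := by
      intro ω b
      have hagree : ∀ (j : Fin N) (s : Fin T), s.val ≤ t'.val → upd ω i u b j s = ω j s := by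
        intro j s hs
        refine upd_ne ω i u b j s fun hc => ?_
        rw [hc.2] at hs
        simp only [hu] at hs
        omega
      have hσ : act σ (upd ω i u b) t' = act σ ω t' := act_congr σ _ _ t' hagree
      have hπ' : act π (upd ω i u b) t' = act π ω t' := act_congr π _ _ t' hagree
      rw [hfdef]
      simp only [hσ, hπ']
    calc (∑ ω : Flags N T, weight pv ω *
          (if act σ ω t' = some i ∧ ¬ act π ω t' = some i ∧ t'.val + 1 < T ∧
            (∀ s : Fin T, s.val = t'.val + 1 → ω i s = false) then 1 else 0))
        = ∑ ω : Flags N T, weight pv ω * (if ω i u = false then f ω else 0) := by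
          exact Finset.sum_congr rfl fun ω _ => by rw [hrw ω]
      _ = (1 - pv i) * ∑ ω : Flags N T, weight pv ω * f ω := sum_flag_false pv i u f hf
      _ ≤ (1 - p) * ∑ ω : Flags N T, weight pv ω * f ω :=
          mul_le_mul_of_nonneg_right h1p hbase_nonneg
  · have : ∀ ω : Flags N T,
        (if act σ ω t' = some i ∧ ¬ act π ω t' = some i ∧ t'.val + 1 < T ∧
          (∀ s : Fin T, s.val = t'.val + 1 → ω i s = false) then (1:ℝ) else 0) = 0 := by
      intro ω
      rw [if_neg (fun hc => hT hc.2.2.1)]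
    calc _ = ∑ ω : Flags N T, weight pv ω * 0 :=
          Finset.sum_congr rfl fun ω _ => by rw [this ω]
      _ = 0 := by simp
      _ ≤ _ := mul_nonneg h1p0 hbase_nonneg

lemma elim_eq_sum (σ : Policy N T Nbr) (r : Fin N → ℝ) (ω : Flags N T) (t : Fin T) :
    (act σ ω t).elim 0 r
      = ∑ i : Fin N, r i * (if act σ ω t = some i then 1 else 0) := by
  classical
  cases h : act σ ω t with
  | none => simp [h]
  | some j =>
      simp only [h, Option.elim, Option.some.injEq, mul_ite, mul_one, mul_zero]
      rw [Finset.sum_ite_eq]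
      simp

lemma base_split (σ π : Policy N T Nbr) (ω : Flags N T) (i : Fin N) (t : Fin T) :
    (if act σ ω t = some i ∧ ¬ act π ω t = some i then (1:ℝ) else 0)
      = (if act σ ω t = some i then (1:ℝ) else 0)
        - (if act π ω t = some i ∧ act σ ω t = some i then (1:ℝ) else 0) := by
  classical
  by_cases h1 : act σ ω t = some i <;> by_cases h2 : act π ω t = some i <;>
    simp [h1, h2]

end Aux

/-- **Proposition 3.**  Under the shared-Bernoulli coupling of Greedy and any
benchmark policy `π` (in particular the optimal clairvoyant policy `OPT`) with
geometric usage durations `F i = Geometric (pv i)`, if `p = min_i pv i` then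
`LOST ≤ (1 - p) · ( Greedy(I) − Σ_t Σ_i r i · Pr(A*_t = A_t = i) )`. -/
theorem lost_le_geometric_refined
    (N T : ℕ) (hN : 0 < N)
    (r : Fin N → ℝ) (hr0 : ∀ i, 0 ≤ r i) (hrmono : Monotone r)
    (Nbr : Fin T → Finset (Fin N))
    (pv : Fin N → ℝ) (hpv0 : ∀ i, 0 ≤ pv i) (hpv1 : ∀ i, pv i ≤ 1)
    (p : ℝ) (hp : p = ⨅ i, pv i)
    (π : Policy N T Nbr) :
    lost N T Nbr r pv π
      ≤ (1 - p) * (greedyVal N T Nbr r pv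
          - ∑ t : Fin T, ∑ i : Fin N, r i *
              expect pv (fun ω =>
                if act π ω t = some i ∧ act (greedy N T Nbr) ω t = some i
                then 1 else 0)) := by
  classical
  have hNe : Nonempty (Fin N) := ⟨⟨0, hN⟩⟩
  have hpi : ∀ j, p ≤ pv j := by
    intro j
    rw [hp]
    exact ciInf_le (Set.Finite.bddBelow (Set.finite_range pv)) j
  set σ := greedy N T Nbr with hσdef
  have hwnn : ∀ ω : Flags N T, 0 ≤ weight pv ω := weight_nonneg_s8 pv hpv0 hpv1
  set Good : Fin N → Fin T → Flags N T → Prop := fun i t' ω =>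
    act σ ω t' = some i ∧ ¬ act π ω t' = some i ∧ t'.val + 1 < T ∧
      (∀ s : Fin T, s.val = t'.val + 1 → ω i s = false) with hGood
  have step1 : lost N T Nbr r pv π ≤
      ∑ i : Fin N, ∑ t' : Fin T, ∑ ω : Flags N T, weight pv ω * (r i *
        (if Good i t' ω then 1 else 0)) := by
    have h1 : lost N T Nbr r pv π ≤
        ∑ ω : Flags N T, weight pv ω * (∑ i : Fin N, ∑ t' : Fin T, r i *
          (if Good i t' ω then 1 else 0)) := by
      refine Finset.sum_le_sum fun ω _ => ?_
      exact mul_le_mul_of_nonneg_left (pointwise_bound σ π r hr0 ω) (hwnn ω)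
    refine le_trans h1 (le_of_eq ?_)
    simp only [Finset.mul_sum]
    rw [Finset.sum_comm]
    exact Finset.sum_congr rfl fun i _ => Finset.sum_comm
  have step2 : ∀ (i : Fin N) (t' : Fin T),
      (∑ ω : Flags N T, weight pv ω * (r i * (if Good i t' ω then 1 else 0)))
      ≤ r i * ((1 - p) * ∑ ω : Flags N T, weight pv ω *
          (if act σ ω t' = some i ∧ ¬ act π ω t' = some i then 1 else 0)) := by
    intro i t'
    have h1 : (∑ ω : Flags N T, weight pv ω * (r i * (if Good i t' ω then 1 else 0)))
        = r i * ∑ ω : Flags N T, weight pv ω * (if Good i t' ω then 1 else 0) := by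
      rw [Finset.mul_sum]
      exact Finset.sum_congr rfl fun ω _ => by ring
    rw [h1]
    exact mul_le_mul_of_nonneg_left
      (exp_good_le σ π pv hpv0 hpv1 p hpi i t') (hr0 i)
  have step12 : lost N T Nbr r pv π ≤
      ∑ i : Fin N, ∑ t' : Fin T, r i * ((1 - p) * ∑ ω : Flags N T, weight pv ω *
        (if act σ ω t' = some i ∧ ¬ act π ω t' = some i then 1 else 0)) :=
    le_trans step1 (Finset.sum_le_sum fun i _ => Finset.sum_le_sum fun t' _ => step2 i t')
  refine le_trans step12 (le_of_eq ?_)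
  have hEbase : ∀ (i : Fin N) (t' : Fin T),
      (∑ ω : Flags N T, weight pv ω *
        (if act σ ω t' = some i ∧ ¬ act π ω t' = some i then 1 else 0))
      = (∑ ω : Flags N T, weight pv ω * (if act σ ω t' = some i then 1 else 0))
        - _root_.expect pv (fun ω =>
            if act π ω t' = some i ∧ act σ ω t' = some i then 1 else 0) := by
    intro i t'
    unfold _root_.expect
    rw [← Finset.sum_sub_distrib]
    refine Finset.sum_congr rfl fun ω _ => ?_
    rw [base_split σ π ω i t', mul_sub]
  have hgreedy : greedyVal N T Nbr r pv
      = ∑ t' : Fin T, ∑ i : Fin N, r i * ∑ ω : Flags N T, weight pv ω *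
          (if act σ ω t' = some i then 1 else 0) := by
    unfold greedyVal _root_.expect reward
    have h1 : ∀ ω : Flags N T, (∑ t : Fin T, (act σ ω t).elim 0 r)
        = ∑ t : Fin T, ∑ i : Fin N, r i * (if act σ ω t = some i then 1 else 0) :=
      fun ω => Finset.sum_congr rfl fun t _ => elim_eq_sum σ r ω t
    calc ∑ ω : Flags N T, weight pv ω * ∑ t : Fin T, (act σ ω t).elim 0 r
        = ∑ ω : Flags N T, ∑ t : Fin T, ∑ i : Fin N,
            weight pv ω * (r i * (if act σ ω t = some i then 1 else 0)) := by
          refine Finset.sum_congr rfl fun ω _ => ?_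
          rw [h1 ω, Finset.mul_sum]
          exact Finset.sum_congr rfl fun t _ => Finset.mul_sum _ _ _
      _ = ∑ t : Fin T, ∑ i : Fin N, ∑ ω : Flags N T,
            weight pv ω * (r i * (if act σ ω t = some i then 1 else 0)) := by
          rw [Finset.sum_comm]
          exact Finset.sum_congr rfl fun t _ => Finset.sum_comm
      _ = ∑ t' : Fin T, ∑ i : Fin N, r i * ∑ ω : Flags N T, weight pv ω *
            (if act σ ω t' = some i then 1 else 0) := by
          refine Finset.sum_congr rfl fun t _ => Finset.sum_congr rfl fun i _ => ?_
          rw [Finset.mul_sum]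
          exact Finset.sum_congr rfl fun ω _ => by ring
  calc ∑ i : Fin N, ∑ t' : Fin T, r i * ((1 - p) * ∑ ω : Flags N T, weight pv ω *
        (if act σ ω t' = some i ∧ ¬ act π ω t' = some i then 1 else 0))
      = (1 - p) * ∑ i : Fin N, ∑ t' : Fin T,
          (r i * (∑ ω : Flags N T, weight pv ω * (if act σ ω t' = some i then 1 else 0))
            - r i * expect pv (fun ω =>
                if act π ω t' = some i ∧ act σ ω t' = some i then 1 else 0)) := by
        rw [Finset.mul_sum]
        refine Finset.sum_congr rfl fun i _ => ?_
        rw [Finset.mul_sum]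
        refine Finset.sum_congr rfl fun t' _ => ?_
        rw [hEbase i t']
        ring
    _ = (1 - p) * (greedyVal N T Nbr r pv
          - ∑ t : Fin T, ∑ i : Fin N, r i *
              expect pv (fun ω =>
                if act π ω t = some i ∧ act σ ω t = some i then 1 else 0)) := by
        congr 1
        rw [hgreedy]
        simp only [Finset.sum_sub_distrib]
        rw [Finset.sum_comm]
        congr 1
        exact Finset.sum_comm
end
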